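/- (Lemma 3.3) Suppose (a₁,b₁,T₁) and (a₂,b₂,T₂) are 4-chained, write G_j = G_{a_j,b_j,T_j} for j = 1,2, and let σ₁, σ₂ ∈ {−1, +1} be arbitrary signs. Then for every integer K ≥ 1 there exist an integer m ≥ K and real numbers α < β with [α, β] ⊆ [s_{m−1}(b₂,T₂), s_m(b₂,T₂)] such that for every χ ∈ [α, β]: σ₁·G₁(χ) ≤ −(1/2)·a₂·T₂·b₂^{m−1} and σ₂·G₂(χ) ≤ −(1/2)·a₂·T₂·b₂^{m−1} < 0. -/

import Mathlib

open Real Filter Set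

/-- Breakpoints `s_n(b,T) = T·π·(b^n − 1)/(b − 1)`. -/
noncomputable def brk (b T : ℝ) (n : ℕ) : ℝ := T * Real.pi * (b ^ n - 1) / (b - 1)

/-- Index of the segment containing `x ≥ 0`: the unique `m` with `s_m ≤ x < s_{m+1}`
(for `b > 1`, `T > 0`). -/
noncomputable def seg (b T x : ℝ) : ℕ := sInf {n : ℕ | x < brk b T (n + 1)}

/-- The saturated Nussbaum function `N_{a,b,T}`: on `[s_{n−1}, s_n)` (with `m = n − 1`)
it equals `(−1)^m·a·cos((χ − s_m)/(b^m·T))`, extended evenly to `χ < 0`. -/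
noncomputable def satN (a b T : ℝ) (χ : ℝ) : ℝ :=
  (-1 : ℝ) ^ (seg b T |χ|) * a *
    Real.cos ((|χ| - brk b T (seg b T |χ|)) / (b ^ (seg b T |χ|) * T))

/-- The integrated function `G_{a,b,T}(χ) = ∫_0^χ N_{a,b,T}(τ) dτ`. -/
noncomputable def satG (a b T : ℝ) (χ : ℝ) : ℝ := ∫ τ in (0:ℝ)..χ, satN a b T τ

/-- Two triples `(a₁,b₁,T₁)`, `(a₂,b₂,T₂)` are 4-chained. -/
def Chained4 (a₁ b₁ T₁ a₂ b₂ T₂ : ℝ) : Prop :=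
  0 < a₂ ∧ 1 < b₂ ∧ 0 < T₂ ∧
    b₁ = b₂ ^ 4 ∧ a₁ = (b₂ ^ 3 / (1 + b₂ + b₂ ^ 2 + b₂ ^ 3)) * a₂ ∧
    T₁ = (1 + b₂ + b₂ ^ 2 + b₂ ^ 3) * T₂

variable {a b T : ℝ}

lemma brk_zero (b T : ℝ) : brk b T 0 = 0 := by simp [brk]

lemma brk_succ_sub (hb : 1 < b) (n : ℕ) :
    brk b T (n + 1) - brk b T n = T * Real.pi * b ^ n := by
  have h : b - 1 ≠ 0 := by linarith
  rw [brk, brk, div_sub_div_same, div_eq_iff h]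
  ring

lemma brk_strictMono (hb : 1 < b) (hT : 0 < T) : StrictMono (brk b T) := by
  apply strictMono_nat_of_lt_succ
  intro n
  have h := brk_succ_sub (T := T) hb n
  have : 0 < T * Real.pi * b ^ n := by positivity
  linarith
lemma brk_mono (hb : 1 < b) (hT : 0 < T) : Monotone (brk b T) :=
  (brk_strictMono hb hT).monotone

lemma brk_nonneg (hb : 1 < b) (hT : 0 < T) (n : ℕ) : 0 ≤ brk b T n := by
  simpa [brk_zero] using brk_mono hb hT (Nat.zero_le n)

lemma seg_eq (hb : 1 < b) (hT : 0 < T) {x : ℝ} {n : ℕ}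
    (h1 : brk b T n ≤ x) (h2 : x < brk b T (n + 1)) : seg b T x = n := by
  unfold seg
  have hmem : n ∈ {k : ℕ | x < brk b T (k + 1)} := h2
  refine le_antisymm (Nat.sInf_le hmem) ?_
  by_contra hlt
  push_neg at hlt
  have hm := Nat.sInf_mem (Set.nonempty_of_mem hmem)
  have : brk b T (sInf {k : ℕ | x < brk b T (k + 1)} + 1) ≤ brk b T n :=
    brk_mono hb hT (by omega)
  exact absurd (lt_of_lt_of_le hm this) (not_lt.2 h1)

lemma satN_eq (hb : 1 < b) (hT : 0 < T) {x : ℝ} {n : ℕ}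
    (h1 : brk b T n ≤ x) (h2 : x < brk b T (n + 1)) :
    satN a b T x = (-1 : ℝ) ^ n * a * Real.cos ((x - brk b T n) / (b ^ n * T)) := by
  have hx : 0 ≤ x := le_trans (brk_nonneg hb hT n) h1
  rw [satN, abs_of_nonneg hx, seg_eq hb hT h1 h2]

lemma satN_ae_eq (hb : 1 < b) (hT : 0 < T) {x : ℝ} (n : ℕ)
    (h1 : brk b T n ≤ x) (h2 : x ≤ brk b T (n + 1)) :
    ∀ᵐ τ ∂MeasureTheory.volume, τ ∈ Set.uIoc (brk b T n) x →
      satN a b T τ = (-1 : ℝ) ^ n * a * Real.cos ((τ - brk b T n) / (b ^ n * T)) := by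
  have hae : ∀ᵐ τ : ℝ ∂MeasureTheory.volume, τ ≠ brk b T (n + 1) := by
    rw [MeasureTheory.ae_iff]
    simpa using Real.volume_singleton
  filter_upwards [hae] with τ hτ hmem
  rw [Set.uIoc_of_le h1] at hmem
  exact satN_eq hb hT hmem.1.le (lt_of_le_of_ne (hmem.2.trans h2) hτ)

lemma satN_integrable_seg (hb : 1 < b) (hT : 0 < T) {x : ℝ} (n : ℕ)
    (h1 : brk b T n ≤ x) (h2 : x ≤ brk b T (n + 1)) :
    IntervalIntegrable (satN a b T) MeasureTheory.volume (brk b T n) x := by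
  have hg : IntervalIntegrable
      (fun τ => (-1 : ℝ) ^ n * a * Real.cos ((τ - brk b T n) / (b ^ n * T)))
      MeasureTheory.volume (brk b T n) x := by
    apply Continuous.intervalIntegrable
    fun_prop
  exact hg.congr_ae ((MeasureTheory.ae_restrict_iff' measurableSet_uIoc).mpr
    ((satN_ae_eq hb hT n h1 h2).mono fun τ h hm => (h hm).symm))

lemma integral_seg (hb : 1 < b) (hT : 0 < T) {x : ℝ} (n : ℕ)
    (h1 : brk b T n ≤ x) (h2 : x ≤ brk b T (n + 1)) :
    ∫ τ in (brk b T n)..x, satN a b T τ =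
      (-1 : ℝ) ^ n * a * (b ^ n * T) * Real.sin ((x - brk b T n) / (b ^ n * T)) := by
  have hc : (b ^ n * T) ≠ 0 := by positivity
  rw [intervalIntegral.integral_congr_ae (satN_ae_eq hb hT n h1 h2)]
  rw [intervalIntegral.integral_const_mul]
  rw [intervalIntegral.integral_comp_sub_right (fun y => Real.cos (y / (b ^ n * T)))
      (brk b T n)]
  rw [intervalIntegral.integral_comp_div (fun y => Real.cos y) hc]
  rw [integral_cos]
  simp [sub_self, Real.sin_zero, smul_eq_mul]
  ring

lemma satN_integrable_to_brk (hb : 1 < b) (hT : 0 < T) (n : ℕ) :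
    IntervalIntegrable (satN a b T) MeasureTheory.volume 0 (brk b T n) := by
  induction n with
  | zero => simp [brk_zero]
  | succ k ih =>
    exact ih.trans (satN_integrable_seg hb hT k
      ((brk_strictMono hb hT).monotone (Nat.le_succ k)) le_rfl)

lemma satN_integrable_to (hb : 1 < b) (hT : 0 < T) {x : ℝ} (n : ℕ)
    (h1 : brk b T n ≤ x) (h2 : x ≤ brk b T (n + 1)) :
    IntervalIntegrable (satN a b T) MeasureTheory.volume 0 x :=
  (satN_integrable_to_brk hb hT n).trans (satN_integrable_seg hb hT n h1 h2)

lemma satG_brk (hb : 1 < b) (hT : 0 < T) (ha : a ≠ 0) (n : ℕ) :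
    satG a b T (brk b T n) = 0 := by
  induction n with
  | zero => simp [satG, brk_zero]
  | succ k ih =>
    have hle : brk b T k ≤ brk b T (k + 1) := (brk_mono hb hT) (Nat.le_succ k)
    have hadd := intervalIntegral.integral_add_adjacent_intervals
      (satN_integrable_to_brk hb hT k) (satN_integrable_seg (a := a) hb hT k hle le_rfl)
    have hseg := integral_seg (a := a) hb hT k hle le_rfl
    have harg : (brk b T (k + 1) - brk b T k) / (b ^ k * T) = Real.pi := by
      rw [brk_succ_sub hb k]
      field_simp
    rw [harg, Real.sin_pi, mul_zero] at hseg
    rw [satG, ← hadd, hseg]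
    simpa [satG] using ih

lemma satG_eq (hb : 1 < b) (hT : 0 < T) (ha : a ≠ 0) {x : ℝ} (n : ℕ)
    (h1 : brk b T n ≤ x) (h2 : x ≤ brk b T (n + 1)) :
    satG a b T x = (-1 : ℝ) ^ n * a * (b ^ n * T) *
      Real.sin ((x - brk b T n) / (b ^ n * T)) := by
  have hadd := intervalIntegral.integral_add_adjacent_intervals
    (satN_integrable_to_brk (a := a) hb hT n) (satN_integrable_seg (a := a) hb hT n h1 h2)
  have h0 := satG_brk (a := a) hb hT ha n
  rw [satG, ← hadd]
  rw [satG] at h0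
  rw [h0, zero_add, integral_seg hb hT n h1 h2]

lemma half_le_sin {x : ℝ} (h1 : Real.pi / 6 ≤ x) (h2 : x ≤ 5 * Real.pi / 6) :
    1 / 2 ≤ Real.sin x := by
  have hpi := Real.pi_pos
  rw [← Real.cos_pi_div_two_sub x, ← Real.cos_abs]
  calc (1:ℝ)/2 = Real.cos (Real.pi / 3) := Real.cos_pi_div_three.symm
    _ ≤ Real.cos |Real.pi / 2 - x| :=
        Real.cos_le_cos_of_nonneg_of_le_pi (abs_nonneg _) (by linarith)
          (abs_le.mpr ⟨by linarith, by linarith⟩)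


lemma chained_brk {a₁ b₁ T₁ a₂ b₂ T₂ : ℝ} (h : Chained4 a₁ b₁ T₁ a₂ b₂ T₂) (n : ℕ) :
    brk b₁ T₁ n = brk b₂ T₂ (4 * n) := by
  obtain ⟨ha₂, hb₂, hT₂, hb₁, ha₁, hT₁⟩ := h
  have h1 : b₂ - 1 ≠ 0 := by intro hc; nlinarith
  have h4 : b₂ ^ 4 - 1 ≠ 0 := by
    have h14 : 1 < b₂ ^ 4 := one_lt_pow₀ hb₂ (by norm_num)
    intro hc; nlinarith
  rw [brk, brk, hb₁, hT₁, ← pow_mul]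
  rw [div_eq_div_iff h4 h1]
  ring

set_option maxHeartbeats 1600000 in
lemma key {a₁ b₁ T₁ a₂ b₂ T₂ : ℝ} (h : Chained4 a₁ b₁ T₁ a₂ b₂ T₂) (σ₁ σ₂ : ℝ)
    (n r : ℕ) (hr : r ≤ 3)
    (hs1 : σ₁ * (-1 : ℝ) ^ n = -1) (hs2 : σ₂ * (-1 : ℝ) ^ (4 * n + r) = -1)
    (A t₀ t₁ : ℝ) (ht₀ : 0 ≤ t₀) (htt : t₀ < t₁) (ht₁ : t₁ ≤ 1)
    (hA : brk b₂ T₂ (4 * n + r) = brk b₂ T₂ (4 * n) + Real.pi * T₂ * b₂ ^ (4 * n) * A)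
    (h2 : ∀ t, t₀ ≤ t → t ≤ t₁ → 1 / 2 ≤ Real.sin (Real.pi * t))
    (h1 : ∀ t, t₀ ≤ t → t ≤ t₁ → b₂ ^ r / (2 * b₂ ^ 3) ≤
      Real.sin (Real.pi * ((A + t * b₂ ^ r) / (1 + b₂ + b₂ ^ 2 + b₂ ^ 3)))) :
    ∃ α β : ℝ, α < β ∧
      Set.Icc α β ⊆ Set.Icc (brk b₂ T₂ (4 * n + r)) (brk b₂ T₂ (4 * n + r + 1)) ∧
      ∀ χ ∈ Set.Icc α β,
        σ₁ * satG a₁ b₁ T₁ χ ≤ -(1 / 2) * (a₂ * T₂ * b₂ ^ (4 * n + r)) ∧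
        σ₂ * satG a₂ b₂ T₂ χ ≤ -(1 / 2) * (a₂ * T₂ * b₂ ^ (4 * n + r)) := by
  obtain ⟨ha₂, hb₂, hT₂, hb₁, ha₁, hT₁⟩ := h
  have hpi := Real.pi_pos
  have hb₂0 : 0 < b₂ := by linarith
  set S : ℝ := 1 + b₂ + b₂ ^ 2 + b₂ ^ 3 with hS
  have hS0 : 0 < S := by positivity
  have hb₁' : 1 < b₁ := by rw [hb₁]; exact one_lt_pow₀ hb₂ (by norm_num)
  have hT₁' : 0 < T₁ := by rw [hT₁]; positivity
  have ha₁' : 0 < a₁ := by rw [ha₁]; positivity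
  set s : ℝ := brk b₂ T₂ (4 * n + r) with hs
  set L : ℝ := Real.pi * T₂ * b₂ ^ (4 * n + r) with hL
  have hL0 : 0 < L := by positivity
  refine ⟨s + t₀ * L, s + t₁ * L, by nlinarith, ?_, ?_⟩
  · intro χ hχ
    obtain ⟨hχ1, hχ2⟩ := hχ
    constructor
    · nlinarith
    · have hnext : brk b₂ T₂ (4 * n + r + 1) = s + L := by
        have := brk_succ_sub (T := T₂) hb₂ (4 * n + r)
        rw [hs]; linarith
      rw [hnext]; nlinarith
  · intro χ hχ
    obtain ⟨hχ1, hχ2⟩ := hχ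
    set t : ℝ := (χ - s) / L with ht
    have hts : χ - s = t * L := by rw [ht, div_mul_cancel₀ _ hL0.ne']
    have htl : t₀ ≤ t := by rw [ht]; rw [le_div_iff₀ hL0]; linarith
    have htu : t ≤ t₁ := by rw [ht]; rw [div_le_iff₀ hL0]; linarith
    -- location of χ in the fine grid
    have hχlow : s ≤ χ := by nlinarith
    have hχhigh : χ ≤ brk b₂ T₂ (4 * n + r + 1) := by
      have := brk_succ_sub (T := T₂) hb₂ (4 * n + r)
      nlinarith
    -- G₂ value
    have hG2 : satG a₂ b₂ T₂ χ =
        (-1 : ℝ) ^ (4 * n + r) * a₂ * (b₂ ^ (4 * n + r) * T₂) * Real.sin (Real.pi * t) := by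
      rw [satG_eq hb₂ hT₂ (ne_of_gt ha₂) (4 * n + r) hχlow hχhigh]
      congr 1
      rw [hts, hL]
      congr 1
      field_simp
    -- G₁ value
    have hc4 : brk b₁ T₁ n = brk b₂ T₂ (4 * n) :=
      chained_brk ⟨ha₂, hb₂, hT₂, hb₁, ha₁, hT₁⟩ n
    have hc4' : brk b₁ T₁ (n + 1) = brk b₂ T₂ (4 * (n + 1)) :=
      chained_brk ⟨ha₂, hb₂, hT₂, hb₁, ha₁, hT₁⟩ (n + 1)
    have hχlow1 : brk b₁ T₁ n ≤ χ := by
      rw [hc4]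
      have : brk b₂ T₂ (4 * n) ≤ s := brk_mono hb₂ hT₂ (by omega)
      linarith
    have hχhigh1 : χ ≤ brk b₁ T₁ (n + 1) := by
      rw [hc4']
      have : brk b₂ T₂ (4 * n + r + 1) ≤ brk b₂ T₂ (4 * (n + 1)) :=
        brk_mono hb₂ hT₂ (by omega)
      linarith
    have hpow : b₁ ^ n * T₁ = b₂ ^ (4 * n) * S * T₂ := by
      rw [hb₁, hT₁, ← pow_mul]; ring
    have hb4n : (0:ℝ) < b₂ ^ (4 * n) := by positivity
    have hnum : χ - brk b₂ T₂ (4 * n) = Real.pi * T₂ * b₂ ^ (4 * n) * (A + t * b₂ ^ r) := by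
      have h1 : χ - s = t * L := hts
      have h2 : s = brk b₂ T₂ (4 * n) + Real.pi * T₂ * b₂ ^ (4 * n) * A := hA
      rw [hL, pow_add] at h1
      linear_combination h1 + h2
    have harg : (χ - brk b₁ T₁ n) / (b₁ ^ n * T₁) = Real.pi * ((A + t * b₂ ^ r) / S) := by
      rw [hc4, hpow, hnum]
      field_simp
    have hG1 : satG a₁ b₁ T₁ χ = (-1 : ℝ) ^ n * a₁ * (b₂ ^ (4 * n) * S * T₂) *
        Real.sin (Real.pi * ((A + t * b₂ ^ r) / S)) := by
      rw [satG_eq hb₁' hT₁' (ne_of_gt ha₁') n hχlow1 hχhigh1, harg, hpow]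
    have hsin2 := h2 t htl htu
    have hsin1 := h1 t htl htu
    have hb4r : (0:ℝ) < b₂ ^ (4 * n + r) := by positivity
    constructor
    · rw [hG1]
      have hkey : σ₁ * ((-1 : ℝ) ^ n * a₁ * (b₂ ^ (4 * n) * S * T₂)) =
          -(a₂ * T₂ * b₂ ^ (4 * n + 3)) := by
        calc σ₁ * ((-1 : ℝ) ^ n * a₁ * (b₂ ^ (4 * n) * S * T₂))
            = (σ₁ * (-1 : ℝ) ^ n) * (a₁ * (b₂ ^ (4 * n) * S * T₂)) := by ring
          _ = -(a₁ * (b₂ ^ (4 * n) * S * T₂)) := by rw [hs1]; ring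
          _ = -(a₂ * T₂ * b₂ ^ (4 * n + 3)) := by
              rw [ha₁, pow_add]
              field_simp
      rw [show σ₁ * ((-1 : ℝ) ^ n * a₁ * (b₂ ^ (4 * n) * S * T₂) *
          Real.sin (Real.pi * ((A + t * b₂ ^ r) / S))) =
          (σ₁ * ((-1 : ℝ) ^ n * a₁ * (b₂ ^ (4 * n) * S * T₂))) *
          Real.sin (Real.pi * ((A + t * b₂ ^ r) / S)) from by ring, hkey]
      -- need : -(a₂T₂ b^{4n+3}) * sin ≤ -(1/2) a₂ T₂ b^{4n+r}
      have hbexp : b₂ ^ (4 * n + 3) * (b₂ ^ r / (2 * b₂ ^ 3)) = b₂ ^ (4 * n + r) / 2 := by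
        rw [pow_add, pow_add]
        field_simp
      have h3 : (0:ℝ) < b₂ ^ (4 * n + 3) := by positivity
      have h5 : a₂ * T₂ * (b₂ ^ (4 * n + 3) * (b₂ ^ r / (2 * b₂ ^ 3))) =
          a₂ * T₂ * (b₂ ^ (4 * n + r) / 2) := by rw [hbexp]
      have h6 := mul_le_mul_of_nonneg_left hsin1
        (le_of_lt (mul_pos (mul_pos ha₂ hT₂) h3))
      have h7 : a₂ * T₂ * b₂ ^ (4 * n + 3) * (b₂ ^ r / (2 * b₂ ^ 3)) =
          a₂ * T₂ * b₂ ^ (4 * n + r) / 2 := by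
        rw [mul_assoc, hbexp]; ring
      linarith [h6, h7]
    · rw [hG2]
      have hkey : σ₂ * ((-1 : ℝ) ^ (4 * n + r) * a₂ * (b₂ ^ (4 * n + r) * T₂)) =
          -(a₂ * T₂ * b₂ ^ (4 * n + r)) := by
        rw [show σ₂ * ((-1 : ℝ) ^ (4 * n + r) * a₂ * (b₂ ^ (4 * n + r) * T₂)) =
            (σ₂ * (-1 : ℝ) ^ (4 * n + r)) * (a₂ * (b₂ ^ (4 * n + r) * T₂)) from by ring, hs2]
        ring
      rw [show σ₂ * ((-1 : ℝ) ^ (4 * n + r) * a₂ * (b₂ ^ (4 * n + r) * T₂) *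
          Real.sin (Real.pi * t)) =
          (σ₂ * ((-1 : ℝ) ^ (4 * n + r) * a₂ * (b₂ ^ (4 * n + r) * T₂))) *
          Real.sin (Real.pi * t) from by ring, hkey]
      have h6 := mul_le_mul_of_nonneg_left hsin2
        (le_of_lt (mul_pos (mul_pos ha₂ hT₂) hb4r))
      linarith [h6]

lemma brk_add3 (hb : 1 < b) (k : ℕ) :
    brk b T (k + 3) = brk b T k + Real.pi * T * b ^ k * (1 + b + b ^ 2) := by
  have e0 : brk b T (k + 1) - brk b T k = T * Real.pi * b ^ k := brk_succ_sub hb k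
  have e1 : brk b T (k + 2) - brk b T (k + 1) = T * Real.pi * b ^ (k + 1) :=
    brk_succ_sub hb (k + 1)
  have e2 : brk b T (k + 3) - brk b T (k + 2) = T * Real.pi * b ^ (k + 2) :=
    brk_succ_sub hb (k + 2)
  have p1 : b ^ (k + 1) = b ^ k * b := by rw [pow_succ]
  have p2 : b ^ (k + 2) = b ^ k * b ^ 2 := by rw [pow_add]
  linear_combination e0 + e1 + e2 + T * Real.pi * p1 + T * Real.pi * p2

-- sine estimates for the fine-segment parameter in case r = 3
lemma sin3_est {b : ℝ} (hb : 1 < b) {t : ℝ} (htl : 1 / 6 ≤ t)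
    (htu : t ≤ 1 / 6 + (4 * b ^ 3 - (1 + b + b ^ 2)) / (6 * b ^ 3)) :
    b ^ 3 / (2 * b ^ 3) ≤
      Real.sin (Real.pi * (((1 + b + b ^ 2) + t * b ^ 3) / (1 + b + b ^ 2 + b ^ 3))) := by
  have hpi := Real.pi_pos
  have hb0 : 0 < b := by linarith
  have hb3 : (0:ℝ) < b ^ 3 := by positivity
  set S : ℝ := 1 + b + b ^ 2 + b ^ 3 with hS
  have hS0 : 0 < S := by positivity
  set u : ℝ := ((1 + b + b ^ 2) + t * b ^ 3) / S with hu
  have htb : t * b ^ 3 ≤ b ^ 3 / 6 + (4 * b ^ 3 - (1 + b + b ^ 2)) / 6 := by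
    have h1 := mul_le_mul_of_nonneg_right htu hb3.le
    have h2 : (1 / 6 + (4 * b ^ 3 - (1 + b + b ^ 2)) / (6 * b ^ 3)) * b ^ 3 =
        b ^ 3 / 6 + (4 * b ^ 3 - (1 + b + b ^ 2)) / 6 := by
      field_simp
    linarith [h1, h2.symm.le]
  have htb' : b ^ 3 / 6 ≤ t * b ^ 3 := by nlinarith [mul_le_mul_of_nonneg_right htl hb3.le]
  have hul : 1 / 6 ≤ u := by
    rw [hu, le_div_iff₀ hS0]
    nlinarith
  have huu : u ≤ 5 / 6 := by
    rw [hu, div_le_iff₀ hS0]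
    nlinarith
  have hbeq : b ^ 3 / (2 * b ^ 3) = 1 / 2 := by
    field_simp
  rw [hbeq]
  apply half_le_sin
  · linarith [mul_le_mul_of_nonneg_left hul hpi.le]
  · linarith [mul_le_mul_of_nonneg_left huu hpi.le]

-- sine estimate for the coarse-segment parameter in case r = 0
set_option maxHeartbeats 1600000 in
lemma sin0_est {b : ℝ} (hb : 1 < b) {t : ℝ} (htl : 3 / 4 ≤ t) (htu : t ≤ 5 / 6) :
    b ^ 0 / (2 * b ^ 3) ≤ Real.sin (Real.pi * ((0 + t * b ^ 0) / (1 + b + b ^ 2 + b ^ 3))) := by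
  have hpi := Real.pi_pos
  have hπl : (3.14 : ℝ) < Real.pi := by
    have := Real.pi_gt_d6
    linarith
  have hπu : Real.pi < 3.15 := Real.pi_lt_d2
  have hb0 : 0 < b := by linarith
  have hb3 : (0:ℝ) < b ^ 3 := by positivity
  set S : ℝ := 1 + b + b ^ 2 + b ^ 3 with hS
  have hS0 : 0 < S := by positivity
  have hbb2 : 1 < b ^ 2 := by nlinarith
  have hbb3 : 1 < b ^ 3 := by nlinarith
  have hbb : b ≤ b ^ 3 := by nlinarith
  have hbb' : b ^ 2 ≤ b ^ 3 := by nlinarith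
  have hS4 : 4 < S := by rw [hS]; linarith
  have hS4b : S ≤ 4 * b ^ 3 := by rw [hS]; linarith
  have harg : (0 + t * b ^ 0) / S = t / S := by norm_num
  rw [harg, pow_zero]
  set θ : ℝ := Real.pi * (t / S) with hθ
  have hθpos : 0 < θ := by
    rw [hθ]
    positivity
  have hθS : θ * S = Real.pi * t := by
    rw [hθ]
    field_simp
  have huL : 2.35 ≤ Real.pi * t := by
    have := mul_le_mul_of_nonneg_left htl hpi.le
    linarith
  have huU : Real.pi * t ≤ 2.63 := by
    have := mul_le_mul_of_nonneg_left htu hpi.le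
    linarith
  have hθu66 : θ ≤ 0.66 := by
    nlinarith [mul_pos hθpos (show (0:ℝ) < S - 4 by linarith)]
  have hθ1 : θ ≤ 1 := by linarith
  have hθsq : θ ^ 2 ≤ 0.4356 := by nlinarith [hθu66, hθpos]
  have hsin := Real.sin_gt_sub_cube hθpos
  have hpos : 0 ≤ θ - θ ^ 3 / 4 := by
    nlinarith [mul_le_mul_of_nonneg_left hθsq hθpos.le]
  have hθSl : 2.35 ≤ θ * S := by rw [hθS]; exact huL
  have hθSu : θ * S ≤ 2.63 := by rw [hθS]; exact huU
  have hkey : 1 / (2 * b ^ 3) ≤ θ - θ ^ 3 / 4 := by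
    rw [div_le_iff₀ (by positivity : (0:ℝ) < 2 * b ^ 3)]
    have c1 := mul_le_mul_of_nonneg_left (show S / 2 ≤ 2 * b ^ 3 by linarith) hpos
    have c2 : (θ - θ ^ 3 / 4) * (S / 2) = (θ * S) / 2 - θ ^ 2 * (θ * S) / 8 := by ring
    have c3 : θ ^ 2 * (θ * S) ≤ 0.4356 * 2.63 :=
      mul_le_mul hθsq hθSu (by linarith) (by norm_num)
    nlinarith [c1, c2, c3]
  linarith [pow_pos hθpos 3]

lemma final_wrap {a₁ b₁ T₁ a₂ b₂ T₂ : ℝ} (h : Chained4 a₁ b₁ T₁ a₂ b₂ T₂) (σ₁ σ₂ : ℝ)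
    (n r : ℕ) (hr : r ≤ 3)
    (hs1 : σ₁ * (-1 : ℝ) ^ n = -1) (hs2 : σ₂ * (-1 : ℝ) ^ (4 * n + r) = -1)
    (A t₀ t₁ : ℝ) (ht₀ : 0 ≤ t₀) (htt : t₀ < t₁) (ht₁ : t₁ ≤ 1)
    (hA : brk b₂ T₂ (4 * n + r) = brk b₂ T₂ (4 * n) + Real.pi * T₂ * b₂ ^ (4 * n) * A)
    (h2 : ∀ t, t₀ ≤ t → t ≤ t₁ → 1 / 2 ≤ Real.sin (Real.pi * t))
    (h1 : ∀ t, t₀ ≤ t → t ≤ t₁ → b₂ ^ r / (2 * b₂ ^ 3) ≤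
      Real.sin (Real.pi * ((A + t * b₂ ^ r) / (1 + b₂ + b₂ ^ 2 + b₂ ^ 3))))
    (K : ℕ) (hK : K ≤ 4 * n + r + 1) :
    ∃ m : ℕ, K ≤ m ∧ ∃ α β : ℝ, α < β ∧
      Set.Icc α β ⊆ Set.Icc (brk b₂ T₂ (m - 1)) (brk b₂ T₂ m) ∧
      (∀ χ ∈ Set.Icc α β,
        σ₁ * satG a₁ b₁ T₁ χ ≤ -(1 / 2) * (a₂ * T₂ * b₂ ^ (m - 1)) ∧
        σ₂ * satG a₂ b₂ T₂ χ ≤ -(1 / 2) * (a₂ * T₂ * b₂ ^ (m - 1))) ∧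
      -(1 / 2) * (a₂ * T₂ * b₂ ^ (m - 1)) < 0 := by
  obtain ⟨α, β, hαβ, hsub, hbound⟩ :=
    key h σ₁ σ₂ n r hr hs1 hs2 A t₀ t₁ ht₀ htt ht₁ hA h2 h1
  obtain ⟨ha₂, hb₂, hT₂, -⟩ := h
  refine ⟨4 * n + r + 1, hK, α, β, hαβ, ?_, ?_, ?_⟩
  · rw [show 4 * n + r + 1 - 1 = 4 * n + r from by omega]
    exact hsub
  · rw [show 4 * n + r + 1 - 1 = 4 * n + r from by omega]
    exact hbound
  · rw [show 4 * n + r + 1 - 1 = 4 * n + r from by omega]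
    have : 0 < a₂ * T₂ * b₂ ^ (4 * n + r) := by positivity
    linarith


/-- Lemma 3.3: for any signs `σ₁, σ₂` and any `K`, there is a fast
segment index `m ≥ K` and a nontrivial subinterval `[α, β]` of it on which both
`σ₁·G₁` and `σ₂·G₂` are below `−(1/2)·a₂·T₂·b₂^{m−1} < 0`. -/
theorem chained_signed_common_interval (a₁ b₁ T₁ a₂ b₂ T₂ : ℝ)
    (h : Chained4 a₁ b₁ T₁ a₂ b₂ T₂) (σ₁ σ₂ : ℝ)
    (hσ₁ : σ₁ = 1 ∨ σ₁ = -1) (hσ₂ : σ₂ = 1 ∨ σ₂ = -1) (K : ℕ) (hK : 1 ≤ K) :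
    ∃ m : ℕ, K ≤ m ∧ ∃ α β : ℝ, α < β ∧
      Set.Icc α β ⊆ Set.Icc (brk b₂ T₂ (m - 1)) (brk b₂ T₂ m) ∧
      (∀ χ ∈ Set.Icc α β,
        σ₁ * satG a₁ b₁ T₁ χ ≤ -(1 / 2) * (a₂ * T₂ * b₂ ^ (m - 1)) ∧
        σ₂ * satG a₂ b₂ T₂ χ ≤ -(1 / 2) * (a₂ * T₂ * b₂ ^ (m - 1))) ∧
      -(1 / 2) * (a₂ * T₂ * b₂ ^ (m - 1)) < 0 := by
  have hb₂ : 1 < b₂ := h.2.1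
  have hb₂0 : 0 < b₂ := by linarith
  have hpi := Real.pi_pos
  have hb3 : (0:ℝ) < b₂ ^ 3 := by positivity
  have hAlt : 1 + b₂ + b₂ ^ 2 < 4 * b₂ ^ 3 := by nlinarith
  have hApos : (0:ℝ) < 1 + b₂ + b₂ ^ 2 := by positivity
  -- data for the case r = 3
  set t₁3 : ℝ := 1 / 6 + (4 * b₂ ^ 3 - (1 + b₂ + b₂ ^ 2)) / (6 * b₂ ^ 3) with ht13
  have htt3 : (1:ℝ) / 6 < t₁3 := by
    have : 0 < (4 * b₂ ^ 3 - (1 + b₂ + b₂ ^ 2)) / (6 * b₂ ^ 3) :=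
      div_pos (by linarith) (by positivity)
    rw [ht13]; linarith
  have ht56 : t₁3 ≤ 5 / 6 := by
    rw [ht13]
    have : (4 * b₂ ^ 3 - (1 + b₂ + b₂ ^ 2)) / (6 * b₂ ^ 3) ≤ 4 / 6 := by
      rw [div_le_iff₀ (by positivity : (0:ℝ) < 6 * b₂ ^ 3)]
      nlinarith
    linarith
  have h23 : ∀ t : ℝ, 1 / 6 ≤ t → t ≤ t₁3 → 1 / 2 ≤ Real.sin (Real.pi * t) := by
    intro t htl htu
    apply half_le_sin
    · linarith [mul_le_mul_of_nonneg_left htl hpi.le]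
    · linarith [mul_le_mul_of_nonneg_left (le_trans htu ht56) hpi.le]
  have h20 : ∀ t : ℝ, 3 / 4 ≤ t → t ≤ 5 / 6 → 1 / 2 ≤ Real.sin (Real.pi * t) := by
    intro t htl htu
    apply half_le_sin
    · have h6 : (1:ℝ) / 6 ≤ t := by linarith
      linarith [mul_le_mul_of_nonneg_left h6 hpi.le]
    · linarith [mul_le_mul_of_nonneg_left htu hpi.le]
  rcases hσ₁ with e1 | e1 <;> rcases hσ₂ with e2 | e2
  · -- σ₁ = 1 (n odd), σ₂ = 1 (r = 3)
    refine final_wrap h σ₁ σ₂ (2 * K + 1) 3 (by norm_num) ?_ ?_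
      (1 + b₂ + b₂ ^ 2) (1 / 6) t₁3 (by norm_num) htt3 (le_trans ht56 (by norm_num))
      (brk_add3 hb₂ (4 * (2 * K + 1))) h23
      (fun t htl htu => sin3_est hb₂ htl htu) K (by omega)
    · rw [e1, pow_succ, pow_mul]; norm_num
    · rw [e2, pow_add, pow_mul]; norm_num
  · -- σ₁ = 1 (n odd), σ₂ = -1 (r = 0)
    refine final_wrap h σ₁ σ₂ (2 * K + 1) 0 (by norm_num) ?_ ?_
      0 (3 / 4) (5 / 6) (by norm_num) (by norm_num) (by norm_num)
      (by simp) h20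
      (fun t htl htu => sin0_est hb₂ htl htu) K (by omega)
    · rw [e1, pow_succ, pow_mul]; norm_num
    · rw [e2, Nat.add_zero, pow_mul]; norm_num
  · -- σ₁ = -1 (n even), σ₂ = 1 (r = 3)
    refine final_wrap h σ₁ σ₂ (2 * K) 3 (by norm_num) ?_ ?_
      (1 + b₂ + b₂ ^ 2) (1 / 6) t₁3 (by norm_num) htt3 (le_trans ht56 (by norm_num))
      (brk_add3 hb₂ (4 * (2 * K))) h23
      (fun t htl htu => sin3_est hb₂ htl htu) K (by omega)
    · rw [e1, pow_mul]; norm_num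
    · rw [e2, pow_add, pow_mul]; norm_num
  · -- σ₁ = -1 (n even), σ₂ = -1 (r = 0)
    refine final_wrap h σ₁ σ₂ (2 * K) 0 (by norm_num) ?_ ?_
      0 (3 / 4) (5 / 6) (by norm_num) (by norm_num) (by norm_num)
      (by simp) h20
      (fun t htl htu => sin0_est hb₂ htl htu) K (by omega)
    · rw [e1, pow_mul]; norm_num
    · rw [e2, Nat.add_zero, pow_mul]; norm_num
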